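/- Let 𝓛 be a second-order elliptic operator on ℝ^d satisfying the standing assumptions, let V be a locally Hölder continuous potential with λ* := λ*(𝓛,V) finite, and suppose 𝓛 + V − λ* is critical in ℝ^d with ground state Ψ₁*. Then for every λ > λ* there is no C² function Ψ on ℝ^d, other than the zero function, satisfying 𝓛Ψ + VΨ = λΨ on ℝ^d together with |Ψ(x)| ≤ κ Ψ₁*(x) for all x and some constant κ > 0. -/

import Mathlib

open Metric Set Filter

noncomputable section

/-- `ℝ^d` as a Euclidean space. -/
abbrev Euc (d : ℕ) := EuclideanSpace ℝ (Fin d)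

/-- First partial derivative `∂u/∂xᵢ`. -/
def pd {d : ℕ} (u : Euc d → ℝ) (i : Fin d) (x : Euc d) : ℝ :=
  fderiv ℝ u x (EuclideanSpace.single i 1)

/-- Second partial derivative `∂²u/∂xᵢ∂xⱼ`. -/
def pd2 {d : ℕ} (u : Euc d → ℝ) (i j : Fin d) (x : Euc d) : ℝ :=
  fderiv ℝ (fun y => pd u j y) x (EuclideanSpace.single i 1)

/-- The second-order operator `𝓛u = Σ aᶦʲ ∂ᵢⱼu + Σ bᶦ ∂ᵢu`. -/
def Lop {d : ℕ} (a : Euc d → Matrix (Fin d) (Fin d) ℝ) (b : Euc d → Euc d)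
    (u : Euc d → ℝ) (x : Euc d) : ℝ :=
  (∑ i, ∑ j, a x i j * pd2 u i j x) + ∑ i, b x i * pd u i x

/-- Frobenius norm of a matrix. -/
def frob {d : ℕ} (m : Matrix (Fin d) (Fin d) ℝ) : ℝ :=
  Real.sqrt (∑ i, ∑ j, (m i j) ^ 2)

/-- The quadratic form `⟨ξ, m ξ⟩`. -/
def quadForm {d : ℕ} (m : Matrix (Fin d) (Fin d) ℝ) (ξ : Euc d) : ℝ :=
  ∑ i, ∑ j, m i j * ξ i * ξ j

/-- Local Hölder continuity on a set. -/
def LocallyHolderOn {E F : Type*} [PseudoMetricSpace E] [PseudoMetricSpace F]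
    (f : E → F) (s : Set E) : Prop :=
  ∀ x ∈ s, ∃ (C r : NNReal), 0 < r ∧ r ≤ 1 ∧ ∃ ε > 0, HolderOnWith C r f (Metric.ball x ε ∩ s)

/-- Local Hölder continuity. -/
def LocallyHolder {E F : Type*} [PseudoMetricSpace E] [PseudoMetricSpace F] (f : E → F) : Prop :=
  LocallyHolderOn f Set.univ

/-- The set of `λ ∈ ℝ` admitting a positive C² supersolution of `𝓛φ + Vφ ≤ λφ` on `D`. -/
def supersolutions {d : ℕ} (a : Euc d → Matrix (Fin d) (Fin d) ℝ) (b : Euc d → Euc d)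
    (V : Euc d → ℝ) (D : Set (Euc d)) : Set ℝ :=
  {lam | ∃ φ : Euc d → ℝ, (∀ x ∈ D, 0 < φ x) ∧ ContDiffOn ℝ 2 φ D ∧
    ∀ x ∈ D, Lop a b φ x + V x * φ x ≤ lam * φ x}

/-- The generalized principal eigenvalue `λ*(𝓛,V)` on `D`. -/
def lamStar {d : ℕ} (a : Euc d → Matrix (Fin d) (Fin d) ℝ) (b : Euc d → Euc d)
    (V : Euc d → ℝ) (D : Set (Euc d)) : ℝ :=
  sInf (supersolutions a b V D)

/-- `λ*(𝓛,V)` is finite: the defining set is nonempty and bounded below. -/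
def lamStarFinite {d : ℕ} (a : Euc d → Matrix (Fin d) (Fin d) ℝ) (b : Euc d → Euc d)
    (V : Euc d → ℝ) (D : Set (Euc d)) : Prop :=
  (supersolutions a b V D).Nonempty ∧ BddBelow (supersolutions a b V D)

/-- A ground state of `𝓛 + W` in the open connected set `D`: a positive C² solution of
minimal growth at infinity. -/
def IsGroundState {d : ℕ} (a : Euc d → Matrix (Fin d) (Fin d) ℝ) (b : Euc d → Euc d)
    (W : Euc d → ℝ) (u : Euc d → ℝ) (D : Set (Euc d)) : Prop :=
  (∀ x ∈ D, 0 < u x) ∧ ContDiffOn ℝ 2 u D ∧ (∀ x ∈ D, Lop a b u x + W x * u x = 0) ∧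
  ∀ K : Set (Euc d), IsCompact K → K ⊆ D →
    ∀ v : Euc d → ℝ, ContDiffOn ℝ 2 v (D \ K) → (∀ x ∈ D \ K, 0 < v x) →
      (∀ x ∈ D \ K, Lop a b v x + W x * v x ≤ 0) →
      ∃ K' : Set (Euc d), IsCompact K' ∧ K ⊆ K' ∧ K' ⊆ D ∧
        ∃ κ > 0, ∀ x ∈ D \ K', κ * u x ≤ v x

/-- Membership in `C₀⁺(ℝ^d)`: continuous, nonnegative, not identically zero, vanishing
at infinity. -/
def C0plus {d : ℕ} (h : Euc d → ℝ) : Prop :=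
  Continuous h ∧ (∀ x, 0 ≤ h x) ∧ (∃ x, h x ≠ 0) ∧ Tendsto h (cocompact (Euc d)) (nhds 0)

/-- `λ*` is strictly monotone at `V` on the right. -/
def StrictMonoRight {d : ℕ} (a : Euc d → Matrix (Fin d) (Fin d) ℝ) (b : Euc d → Euc d)
    (V : Euc d → ℝ) : Prop :=
  ∀ h : Euc d → ℝ, C0plus h →
    lamStar a b V Set.univ < lamStar a b (fun x => V x + h x) Set.univ

/-- `λ*` is strictly monotone at `V` (on both sides). -/
def StrictMonoAt {d : ℕ} (a : Euc d → Matrix (Fin d) (Fin d) ℝ) (b : Euc d → Euc d)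
    (V : Euc d → ℝ) : Prop :=
  ∀ h : Euc d → ℝ, C0plus h →
    lamStar a b (fun x => V x - h x) Set.univ < lamStar a b V Set.univ ∧
    lamStar a b V Set.univ < lamStar a b (fun x => V x + h x) Set.univ

/-- Standing assumptions (A1)–(A3) with `b` Borel measurable and locally bounded. -/
structure StandingB {d : ℕ} (a : Euc d → Matrix (Fin d) (Fin d) ℝ) (b : Euc d → Euc d) : Prop where
  posdef : ∀ x, (a x).PosDef
  aLip : ∀ R > 0, ∃ C > 0, ∀ x y : Euc d, ‖x‖ ≤ R → ‖y‖ ≤ R →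
    frob (a x - a y) ≤ C * ‖x - y‖
  bMeas : Measurable b
  bLocBdd : ∀ R > 0, ∃ C, ∀ x : Euc d, ‖x‖ ≤ R → ‖b x‖ ≤ C
  nondeg : ∀ R > 0, ∃ C > 0, ∀ x : Euc d, ‖x‖ ≤ R → ∀ ξ : Euc d,
    C⁻¹ * ‖ξ‖ ^ 2 ≤ quadForm (a x) ξ
  growth : ∃ C₀ > 0, ∀ x : Euc d,
    max (∑ i, b x i * x i) 0 + frob (a x) ≤ C₀ * (1 + ‖x‖ ^ 2)

/-- Standing assumptions (A1)–(A3) with `b` locally Hölder continuous. -/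
structure StandingH {d : ℕ} (a : Euc d → Matrix (Fin d) (Fin d) ℝ) (b : Euc d → Euc d) : Prop where
  posdef : ∀ x, (a x).PosDef
  aLip : ∀ R > 0, ∃ C > 0, ∀ x y : Euc d, ‖x‖ ≤ R → ‖y‖ ≤ R →
    frob (a x - a y) ≤ C * ‖x - y‖
  bHolder : LocallyHolder b
  nondeg : ∀ R > 0, ∃ C > 0, ∀ x : Euc d, ‖x‖ ≤ R → ∀ ξ : Euc d,
    C⁻¹ * ‖ξ‖ ^ 2 ≤ quadForm (a x) ξ
  growth : ∃ C₀ > 0, ∀ x : Euc d,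
    max (∑ i, b x i * x i) 0 + frob (a x) ≤ C₀ * (1 + ‖x‖ ^ 2)


section AuxiliaryStatement10

open Topology Finset

lemma contDiff_pd {d : ℕ} {u : Euc d → ℝ} (hu : ContDiff ℝ 2 u) (j : Fin d) :
    ContDiff ℝ 1 (pd u j) := by
  have h1 : ContDiff ℝ 1 (fderiv ℝ u) := hu.fderiv_right (by norm_num)
  exact h1.clm_apply contDiff_const

lemma pd_mul {d : ℕ} {f g : Euc d → ℝ} (hf : Differentiable ℝ f) (hg : Differentiable ℝ g)
    (j : Fin d) (x : Euc d) :
    pd (fun y => f y * g y) j x = f x * pd g j x + g x * pd f j x := by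
  unfold pd
  rw [fderiv_fun_mul (hf x) (hg x)]
  simp

lemma pd_add {d : ℕ} {f g : Euc d → ℝ} (hf : Differentiable ℝ f) (hg : Differentiable ℝ g)
    (j : Fin d) (x : Euc d) :
    pd (fun y => f y + g y) j x = pd f j x + pd g j x := by
  unfold pd; rw [fderiv_fun_add (hf x) (hg x)]; simp

lemma pd_sub {d : ℕ} {f g : Euc d → ℝ} (hf : Differentiable ℝ f) (hg : Differentiable ℝ g)
    (j : Fin d) (x : Euc d) :
    pd (fun y => f y - g y) j x = pd f j x - pd g j x := by
  unfold pd; rw [fderiv_fun_sub (hf x) (hg x)]; simp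

lemma pd_const_mul {d : ℕ} {f : Euc d → ℝ} (hf : Differentiable ℝ f) (c : ℝ)
    (j : Fin d) (x : Euc d) :
    pd (fun y => c * f y) j x = c * pd f j x := by
  unfold pd; rw [fderiv_const_mul (hf x)]; simp

lemma pd2_mul {d : ℕ} {f g : Euc d → ℝ} (hf : ContDiff ℝ 2 f) (hg : ContDiff ℝ 2 g)
    (i j : Fin d) (x : Euc d) :
    pd2 (fun y => f y * g y) i j x =
      f x * pd2 g i j x + pd f i x * pd g j x + pd g i x * pd f j x + g x * pd2 f i j x := by
  have hfd : Differentiable ℝ f := hf.differentiable two_ne_zero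
  have hgd : Differentiable ℝ g := hg.differentiable two_ne_zero
  have hpf : Differentiable ℝ (pd f j) := (contDiff_pd hf j).differentiable one_ne_zero
  have hpg : Differentiable ℝ (pd g j) := (contDiff_pd hg j).differentiable one_ne_zero
  unfold pd2
  have hrw : (fun y => pd (fun z => f z * g z) j y) = fun y => f y * pd g j y + g y * pd f j y :=
    funext fun y => pd_mul hfd hgd j y
  rw [hrw, fderiv_fun_add ((hfd x).fun_mul (hpg x)) ((hgd x).fun_mul (hpf x)),
    fderiv_fun_mul (hfd x) (hpg x), fderiv_fun_mul (hgd x) (hpf x)]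
  have e1 : pd g j = fun y => (fderiv ℝ g y) (EuclideanSpace.single j 1) := rfl
  have e2 : pd f j = fun y => (fderiv ℝ f y) (EuclideanSpace.single j 1) := rfl
  simp only [ContinuousLinearMap.add_apply, ContinuousLinearMap.smul_apply, smul_eq_mul, pd,
    e1, e2]
  ring

lemma pd2_sub {d : ℕ} {f g : Euc d → ℝ} (hf : ContDiff ℝ 2 f) (hg : ContDiff ℝ 2 g)
    (i j : Fin d) (x : Euc d) :
    pd2 (fun y => f y - g y) i j x = pd2 f i j x - pd2 g i j x := by
  have hpf : Differentiable ℝ (pd f j) := (contDiff_pd hf j).differentiable one_ne_zero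
  have hpg : Differentiable ℝ (pd g j) := (contDiff_pd hg j).differentiable one_ne_zero
  unfold pd2
  have hrw : (fun y => pd (fun z => f z - g z) j y) = fun y => pd f j y - pd g j y :=
    funext fun y => pd_sub (hf.differentiable two_ne_zero) (hg.differentiable two_ne_zero) j y
  rw [hrw, fderiv_fun_sub (hpf x) (hpg x)]; simp

lemma pd2_const_mul {d : ℕ} {f : Euc d → ℝ} (hf : ContDiff ℝ 2 f) (c : ℝ)
    (i j : Fin d) (x : Euc d) :
    pd2 (fun y => c * f y) i j x = c * pd2 f i j x := by
  have hpf : Differentiable ℝ (pd f j) := (contDiff_pd hf j).differentiable one_ne_zero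
  unfold pd2
  have hrw : (fun y => pd (fun z => c * f z) j y) = fun y => c * pd f j y :=
    funext fun y => pd_const_mul (hf.differentiable two_ne_zero) c j y
  rw [hrw, fderiv_const_mul (hpf x)]; simp

def crossE {d : ℕ} (a : Euc d → Matrix (Fin d) (Fin d) ℝ) (f g : Euc d → ℝ) (x : Euc d) : ℝ :=
  ∑ i, ∑ j, a x i j * pd f i x * pd g j x

lemma Lop_mul {d : ℕ} {a : Euc d → Matrix (Fin d) (Fin d) ℝ} {b : Euc d → Euc d}
    {f g : Euc d → ℝ} (hf : ContDiff ℝ 2 f) (hg : ContDiff ℝ 2 g) (x : Euc d)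
    (hsym : ∀ i j, a x i j = a x j i) :
    Lop a b (fun y => f y * g y) x
      = f x * Lop a b g x + g x * Lop a b f x + 2 * crossE a f g x := by
  have hfd : Differentiable ℝ f := hf.differentiable two_ne_zero
  have hgd : Differentiable ℝ g := hg.differentiable two_ne_zero
  have key : ∀ i j, a x i j * pd2 (fun y => f y * g y) i j x
      = f x * (a x i j * pd2 g i j x) + g x * (a x i j * pd2 f i j x)
        + (a x i j * pd f i x * pd g j x + a x i j * pd g i x * pd f j x) := fun i j => by
    rw [pd2_mul hf hg]; ring
  have keyb : ∀ i, b x i * pd (fun y => f y * g y) i x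
      = f x * (b x i * pd g i x) + g x * (b x i * pd f i x) := fun i => by
    rw [pd_mul hfd hgd]; ring
  have sym : (∑ i, ∑ j, a x i j * pd g i x * pd f j x)
      = ∑ i, ∑ j, a x i j * pd f i x * pd g j x := by
    rw [Finset.sum_comm]
    exact Finset.sum_congr rfl fun i _ => Finset.sum_congr rfl fun j _ => by rw [hsym i j]; ring
  unfold Lop crossE
  simp only [key, keyb, Finset.sum_add_distrib, ← Finset.mul_sum]
  rw [sym]; ring

lemma Lop_sub_const_mul {d : ℕ} {a : Euc d → Matrix (Fin d) (Fin d) ℝ} {b : Euc d → Euc d}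
    {u v : Euc d → ℝ} (hu : ContDiff ℝ 2 u) (hv : ContDiff ℝ 2 v) (c : ℝ) (x : Euc d) :
    Lop a b (fun y => c * u y - v y) x = c * Lop a b u x - Lop a b v x := by
  have hcu : ContDiff ℝ 2 (fun y => c * u y) := contDiff_const.mul hu
  have key : ∀ i j, a x i j * pd2 (fun y => c * u y - v y) i j x
      = c * (a x i j * pd2 u i j x) - a x i j * pd2 v i j x :=
    fun i j => by rw [pd2_sub hcu hv, pd2_const_mul hu]; ring
  have keyb : ∀ i, b x i * pd (fun y => c * u y - v y) i x
      = c * (b x i * pd u i x) - b x i * pd v i x := fun i => by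
    rw [pd_sub (hcu.differentiable two_ne_zero) (hv.differentiable two_ne_zero),
      pd_const_mul (hu.differentiable two_ne_zero)]; ring
  unfold Lop
  simp only [key, keyb, Finset.sum_sub_distrib, ← Finset.mul_sum]
  ring

lemma triple_swap {d : ℕ} (F : Fin d → Fin d → Fin d → ℝ) :
    (∑ i, ∑ j, ∑ k, F i j k) = ∑ k, ∑ i, ∑ j, F i j k := by
  have h1 : ∀ i, (∑ j, ∑ k, F i j k) = ∑ k, ∑ j, F i j k := fun i => Finset.sum_comm
  simp only [h1]
  exact Finset.sum_comm

open scoped MatrixOrder Matrix.Norms.L2Operator in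
lemma entry_decomp {d : ℕ} {m : Matrix (Fin d) (Fin d) ℝ} (hm : m.PosSemidef) :
    ∃ B : Matrix (Fin d) (Fin d) ℝ, ∀ i j, m i j = ∑ k, B k i * B k j := by
  obtain ⟨B, hB⟩ := CStarAlgebra.nonneg_iff_eq_star_mul_self.mp hm.nonneg
  exact ⟨B, fun i j => by rw [hB, Matrix.mul_apply]; simp [Matrix.star_apply]⟩

lemma quad_nonneg {d : ℕ} {m : Matrix (Fin d) (Fin d) ℝ} (hm : m.PosSemidef)
    (ξ : Fin d → ℝ) : 0 ≤ ∑ i, ∑ j, m i j * ξ i * ξ j := by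
  obtain ⟨B, hB⟩ := entry_decomp hm
  have e1 : ∀ i j, m i j * ξ i * ξ j = ∑ k, (B k i * ξ i) * (B k j * ξ j) := fun i j => by
    rw [hB i j, Finset.sum_mul, Finset.sum_mul]
    exact Finset.sum_congr rfl fun k _ => by ring
  have : (∑ i, ∑ j, m i j * ξ i * ξ j) = ∑ k, (∑ i, B k i * ξ i) ^ 2 := by
    simp only [e1]
    rw [triple_swap (fun i j k => (B k i * ξ i) * (B k j * ξ j))]
    exact Finset.sum_congr rfl fun k _ => by rw [sq, Finset.sum_mul_sum]
  rw [this]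
  exact Finset.sum_nonneg fun k _ => sq_nonneg _

lemma trace_nonneg {d : ℕ} {m : Matrix (Fin d) (Fin d) ℝ} (hm : m.PosSemidef)
    (H : Fin d → Fin d → ℝ) (hq : ∀ η : Fin d → ℝ, 0 ≤ ∑ i, ∑ j, η i * η j * H i j) :
    0 ≤ ∑ i, ∑ j, m i j * H i j := by
  obtain ⟨B, hB⟩ := entry_decomp hm
  have e1 : ∀ i j, m i j * H i j = ∑ k, B k i * B k j * H i j := fun i j => by
    rw [hB i j, Finset.sum_mul]
  have : (∑ i, ∑ j, m i j * H i j) = ∑ k, ∑ i, ∑ j, B k i * B k j * H i j := by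
    simp only [e1]
    exact triple_swap _
  rw [this]
  exact Finset.sum_nonneg fun k _ => hq (B k)

/-- 1-D second derivative test at a local minimum. -/
lemma deriv2_nonneg_of_localmin {g : ℝ → ℝ} (hg : ContDiff ℝ 2 g) (hmin : IsLocalMin g 0) :
    0 ≤ deriv (deriv g) 0 := by
  by_contra hneg
  push_neg at hneg
  set g' := deriv g with hg'def
  have hgd : Differentiable ℝ g := hg.differentiable two_ne_zero
  have hg'c : ContDiff ℝ 1 g' := (contDiff_succ_iff_deriv.mp (show ContDiff ℝ (1+1) g by exact_mod_cast hg)).2.2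
  have hg'd : Differentiable ℝ g' := hg'c.differentiable one_ne_zero
  have h0 : g' 0 = 0 := hmin.deriv_eq_zero
  have hda : HasDerivAt g' (deriv g' 0) 0 := (hg'd 0).hasDerivAt
  have hslope : Tendsto (slope g' 0) (𝓝[≠] (0:ℝ)) (𝓝 (deriv g' 0)) :=
    hasDerivAt_iff_tendsto_slope.mp hda
  have hev : ∀ᶠ t in 𝓝[≠] (0:ℝ), slope g' 0 t < 0 := hslope.eventually_lt_const hneg
  have hev' : ∀ᶠ t in 𝓝[>] (0:ℝ), slope g' 0 t < 0 :=
    hev.filter_mono (nhdsWithin_mono _ (fun t ht => ne_of_gt ht))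
  rw [Filter.eventually_iff, mem_nhdsGT_iff_exists_Ioo_subset] at hev'
  obtain ⟨δ, hδmem, hδ⟩ := hev'
  have hδpos : (0:ℝ) < δ := hδmem
  have hneg' : ∀ t ∈ Set.Ioo (0:ℝ) δ, g' t < 0 := by
    intro t ht
    have := hδ ht
    simp only [Set.mem_setOf_eq, slope_def_field, h0] at this
    have h2 : t⁻¹ * g' t < 0 := by
      simpa [slope, h0] using hδ ht
    nlinarith [ht.1, inv_pos.mpr ht.1]
  have hanti : StrictAntiOn g (Set.Icc 0 δ) := by
    apply strictAntiOn_of_deriv_neg (convex_Icc _ _) (hg.continuous.continuousOn)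
    intro t ht
    rw [interior_Icc] at ht
    exact hneg' t ht
  obtain ⟨ε, hεpos, hε⟩ := Metric.eventually_nhds_iff.mp hmin
  set t := min (δ/2) (ε/2) with htdef
  have htpos : 0 < t := lt_min (by linarith) (by linarith)
  have ht1 : t ∈ Set.Icc (0:ℝ) δ := ⟨le_of_lt htpos, le_trans (min_le_left _ _) (by linarith)⟩
  have h5 : g t < g 0 := hanti (Set.mem_Icc.mpr ⟨le_rfl, le_of_lt hδpos⟩) ht1 htpos
  have h6 : g 0 ≤ g t := by
    apply hε
    rw [Real.dist_eq, sub_zero, abs_of_pos htpos]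
    exact lt_of_le_of_lt (min_le_right _ _) (by linarith)
  linarith

/-- Directional second derivative via `pd2`. -/
lemma dir_second_deriv {d : ℕ} {u : Euc d → ℝ} (hu : ContDiff ℝ 2 u) (x₀ η : Euc d) :
    deriv (deriv (fun t : ℝ => u (x₀ + t • η))) 0
      = ∑ i, ∑ j, η i * η j * pd2 u i j x₀ := by
  have hud : Differentiable ℝ u := hu.differentiable two_ne_zero
  set F := fderiv ℝ u with hF
  have hFc : ContDiff ℝ 1 F := hu.fderiv_right (by norm_num)
  have hFd : Differentiable ℝ F := hFc.differentiable one_ne_zero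
  have hline : ∀ t : ℝ, HasDerivAt (fun s : ℝ => x₀ + s • η) η t := by
    intro t
    simpa using ((hasDerivAt_id t).smul_const η).const_add x₀
  have hd1 : deriv (fun t : ℝ => u (x₀ + t • η)) = fun t => F (x₀ + t • η) η := by
    funext t
    exact ((hud (x₀ + t • η)).hasFDerivAt.comp_hasDerivAt t (hline t)).deriv
  rw [hd1]
  -- second derivative
  have hG : DifferentiableAt ℝ (fun y => F y η) x₀ := (hFd x₀).clm_apply (differentiableAt_const η)
  have hd2 : HasDerivAt (fun t : ℝ => F (x₀ + t • η) η)
      ((fderiv ℝ (fun y => F y η) x₀) η) 0 := by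
    have hG' : HasFDerivAt (fun y => F y η) (fderiv ℝ (fun y => F y η) x₀) (x₀ + (0:ℝ) • η) := by
      simpa using hG.hasFDerivAt
    exact hG'.comp_hasDerivAt 0 (hline 0)
  rw [hd2.deriv]
  have hflip : fderiv ℝ (fun y => F y η) x₀ = (fderiv ℝ F x₀).flip η := by
    rw [fderiv_clm_apply (hFd x₀) (differentiableAt_const η)]
    ext w
    simp
  rw [hflip]
  have hpd2 : ∀ i j, pd2 u i j x₀ = (fderiv ℝ F x₀ (EuclideanSpace.single i 1))
      (EuclideanSpace.single j 1) := by
    intro i j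
    unfold pd2 pd
    have : (fun y => fderiv ℝ u y (EuclideanSpace.single j 1))
        = fun y => F y (EuclideanSpace.single j 1) := rfl
    rw [this]
    have hflip' : fderiv ℝ (fun y => F y (EuclideanSpace.single j 1)) x₀
        = (fderiv ℝ F x₀).flip (EuclideanSpace.single j 1) := by
      rw [fderiv_clm_apply (hFd x₀) (differentiableAt_const _)]
      ext w
      simp
    rw [hflip']
    simp
  -- expand η over the basis
  have hexp : η = ∑ i, η i • (EuclideanSpace.single i (1:ℝ)) := by
    have := (EuclideanSpace.basisFun (Fin d) ℝ).sum_repr η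
    simp only [EuclideanSpace.basisFun_repr, EuclideanSpace.basisFun_apply] at this
    exact this.symm
  have expandL : ∀ (L : Euc d →L[ℝ] ℝ), L η = ∑ j, η j * L (EuclideanSpace.single j 1) := by
    intro L
    conv_lhs => rw [hexp]
    rw [map_sum]
    exact Finset.sum_congr rfl fun j _ => by rw [map_smul]; simp
  have expand2 : fderiv ℝ F x₀ η
      = ∑ i, η i • (fderiv ℝ F x₀ (EuclideanSpace.single i 1)) := by
    conv_lhs => rw [hexp]
    rw [map_sum]
    exact Finset.sum_congr rfl fun i _ => by rw [map_smul]
  calc ((fderiv ℝ F x₀).flip η) η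
      = (fderiv ℝ F x₀ η) η := by simp
    _ = ∑ i, ∑ j, η i * η j * pd2 u i j x₀ := by
        rw [expand2, ContinuousLinearMap.sum_apply]
        refine Finset.sum_congr rfl fun i _ => ?_
        rw [ContinuousLinearMap.smul_apply, smul_eq_mul,
          expandL (fderiv ℝ F x₀ (EuclideanSpace.single i 1)), Finset.mul_sum]
        refine Finset.sum_congr rfl fun j _ => ?_
        rw [hpd2 i j]
        ring

lemma Lop_nonneg_at_min {d : ℕ} {a : Euc d → Matrix (Fin d) (Fin d) ℝ} {b : Euc d → Euc d}
    {u : Euc d → ℝ} (hu : ContDiff ℝ 2 u) {x₀ : Euc d} (hmin : ∀ x, u x₀ ≤ u x)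
    (hpsd : (a x₀).PosSemidef) : 0 ≤ Lop a b u x₀ := by
  have hlm : IsLocalMin u x₀ := Filter.Eventually.of_forall fun x => hmin x
  have hf0 : fderiv ℝ u x₀ = 0 := hlm.fderiv_eq_zero
  have hpd0 : ∀ i, pd u i x₀ = 0 := fun i => by simp [pd, hf0]
  have hq : ∀ η : Fin d → ℝ, 0 ≤ ∑ i, ∑ j, η i * η j * pd2 u i j x₀ := by
    intro η
    set ηE : Euc d := (WithLp.equiv 2 (Fin d → ℝ)).symm η with hηE
    have happ : ∀ i, ηE i = η i := fun i => rfl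
    have hline : ContDiff ℝ 2 (fun t : ℝ => x₀ + t • ηE) :=
      contDiff_const.add (contDiff_id.smul contDiff_const)
    have hg : ContDiff ℝ 2 (fun t : ℝ => u (x₀ + t • ηE)) := hu.comp hline
    have hgmin : IsLocalMin (fun t : ℝ => u (x₀ + t • ηE)) 0 := by
      apply Filter.Eventually.of_forall
      intro t
      simpa using hmin (x₀ + t • ηE)
    have := deriv2_nonneg_of_localmin hg hgmin
    rw [dir_second_deriv hu x₀ ηE] at this
    simpa [happ] using this
  have h2 : 0 ≤ ∑ i, ∑ j, a x₀ i j * pd2 u i j x₀ := trace_nonneg hpsd _ hq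
  have h1 : (∑ i, b x₀ i * pd u i x₀) = 0 := by
    simp [hpd0]
  unfold Lop
  rw [h1]
  linarith

end AuxiliaryStatement10

/-- Corollary following Theorem 2.4: if `𝓛 + V - λ*` is critical with ground state `Ψ₁*`,
then for `λ > λ*` there is no nonzero solution `Ψ` of `𝓛Ψ + VΨ = λΨ` with
`|Ψ| ≤ κ Ψ₁*`. -/
theorem statement10 {d : ℕ} (hd : 1 ≤ d)
    (a : Euc d → Matrix (Fin d) (Fin d) ℝ) (b : Euc d → Euc d)
    (hstand : StandingH a b)
    (V : Euc d → ℝ) (hVreg : LocallyHolder V)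
    (hfin : lamStarFinite a b V Set.univ)
    (Ψ₁ : Euc d → ℝ)
    (hgs₁ : IsGroundState a b (fun x => V x - lamStar a b V Set.univ) Ψ₁ Set.univ) :
    ∀ lam : ℝ, lamStar a b V Set.univ < lam →
    ∀ Ψ : Euc d → ℝ, ContDiff ℝ 2 Ψ →
      (∀ x, Lop a b Ψ x + V x * Ψ x = lam * Ψ x) →
      (∃ κ > 0, ∀ x, |Ψ x| ≤ κ * Ψ₁ x) →
      ∀ x, Ψ x = 0 := by
  set l := lamStar a b V Set.univ with hl
  obtain ⟨hpos₁, hC2₁u, heq₁u, hmg⟩ := hgs₁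
  intro lam hlam Ψ hΨC2 hΨeq hκex
  obtain ⟨κ, hκpos, hκb⟩ := hκex
  by_contra hcon
  push_neg at hcon
  obtain ⟨xb, hxb⟩ := hcon
  have hΨ₁pos : ∀ x, 0 < Ψ₁ x := fun x => hpos₁ x (mem_univ x)
  have hΨ₁ne : ∀ x, Ψ₁ x ≠ 0 := fun x => ne_of_gt (hΨ₁pos x)
  have hΨ₁C2 : ContDiff ℝ 2 Ψ₁ := contDiffOn_univ.mp hC2₁u
  have heq₁ : ∀ x, Lop a b Ψ₁ x + (V x - l) * Ψ₁ x = 0 := fun x => heq₁u x (mem_univ x)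
  have hsym : ∀ x (i j : Fin d), a x i j = a x j i := fun x i j => by
    simpa using ((hstand.posdef x).1.apply i j).symm
  set φ : Euc d → ℝ := fun x => Ψ x / Ψ₁ x with hφdef
  have hφC2 : ContDiff ℝ 2 φ := hΨC2.div hΨ₁C2 hΨ₁ne
  have hΨval : ∀ y, Ψ y = φ y * Ψ₁ y := fun y => (div_mul_cancel₀ (Ψ y) (hΨ₁ne y)).symm
  have hΨfun : Ψ = fun y => φ y * Ψ₁ y := funext hΨval
  set ψ : Euc d → ℝ := fun y => φ y * Ψ y with hψdef
  have hψC2 : ContDiff ℝ 2 ψ := hφC2.mul hΨC2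
  set ρ : Euc d → ℝ := fun y => φ y ^ 2 with hρdef
  have hψρ : ∀ y, ψ y = ρ y * Ψ₁ y := fun y => by
    show φ y * Ψ y = φ y ^ 2 * Ψ₁ y
    rw [hΨval y]; ring
  have hρnonneg : ∀ y, 0 ≤ ρ y := fun y => sq_nonneg _
  -- the key differential identity
  have hkey : ∀ x, Lop a b ψ x + (V x - l) * ψ x
      = 2 * (lam - l) * ψ x + 2 * Ψ₁ x * crossE a φ φ x := by
    intro x
    have hLΨ : Lop a b Ψ x
        = φ x * Lop a b Ψ₁ x + Ψ₁ x * Lop a b φ x + 2 * crossE a φ Ψ₁ x := by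
      conv_lhs => rw [hΨfun]
      exact Lop_mul hφC2 hΨ₁C2 x (hsym x)
    have hLψ : Lop a b ψ x
        = φ x * Lop a b Ψ x + Ψ x * Lop a b φ x + 2 * crossE a φ Ψ x :=
      Lop_mul hφC2 hΨC2 x (hsym x)
    have hcross : crossE a φ Ψ x = φ x * crossE a φ Ψ₁ x + Ψ₁ x * crossE a φ φ x := by
      have hpdΨ : ∀ j, pd Ψ j x = φ x * pd Ψ₁ j x + Ψ₁ x * pd φ j x := fun j => by
        conv_lhs => rw [hΨfun]
        rw [pd_mul (hφC2.differentiable two_ne_zero) (hΨ₁C2.differentiable two_ne_zero) j x]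
      unfold crossE
      have e : ∀ i j, a x i j * pd φ i x * pd Ψ j x
          = φ x * (a x i j * pd φ i x * pd Ψ₁ j x) + Ψ₁ x * (a x i j * pd φ i x * pd φ j x) :=
        fun i j => by rw [hpdΨ j]; ring
      simp only [e, Finset.sum_add_distrib, ← Finset.mul_sum]
    have hΨ₁A : Ψ₁ x * Lop a b φ x
        = Lop a b Ψ x - φ x * Lop a b Ψ₁ x - 2 * crossE a φ Ψ₁ x := by linarith [hLΨ]
    have hΨA : Ψ x * Lop a b φ x = φ x * (Ψ₁ x * Lop a b φ x) := by rw [hΨval x]; ring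
    have hψx : ψ x = φ x * Ψ x := rfl
    have h1 := hΨeq x
    have h2 := heq₁ x
    rw [hLψ, hcross, hΨA, hΨ₁A, hψx]
    linear_combination (2 * φ x) * h1 - (φ x ^ 2) * h2 - ((V x - l) * φ x) * (hΨval x)
  have hsub : ∀ x, 2 * (lam - l) * ψ x ≤ Lop a b ψ x + (V x - l) * ψ x := by
    intro x
    have h0 : 0 ≤ crossE a φ φ x := quad_nonneg (hstand.posdef x).posSemidef (fun i => pd φ i x)
    rw [hkey x]
    nlinarith [hΨ₁pos x]
  -- boundedness of ρ and its supremum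
  have hρbdd : ∀ x, ρ x ≤ κ ^ 2 := by
    intro x
    have h := abs_le.mp (hκb x)
    have e : ρ x * Ψ₁ x ^ 2 = Ψ x ^ 2 := by
      show φ x ^ 2 * Ψ₁ x ^ 2 = Ψ x ^ 2
      rw [hΨval x]; ring
    nlinarith [hΨ₁pos x, mul_pos (hΨ₁pos x) (hΨ₁pos x), e,
      mul_nonneg (sub_nonneg.mpr h.2) (by linarith [h.1] : (0:ℝ) ≤ κ * Ψ₁ x + Ψ x)]
  have hbddA : BddAbove (Set.range ρ) := by
    refine ⟨κ ^ 2, ?_⟩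
    rintro r ⟨x, rfl⟩
    exact hρbdd x
  have hrne : (Set.range ρ).Nonempty := ⟨ρ xb, Set.mem_range_self xb⟩
  set M := sSup (Set.range ρ) with hMdef
  have hρleM : ∀ x, ρ x ≤ M := fun x => le_csSup hbddA (Set.mem_range_self x)
  have hMpos : 0 < M := by
    have hφxb : φ xb ≠ 0 := div_ne_zero hxb (hΨ₁ne xb)
    have : 0 < ρ xb := pow_two_pos_of_ne_zero hφxb
    exact lt_of_lt_of_le this (hρleM xb)
  have hρcont : Continuous ρ := (hφC2.continuous).pow 2
  by_cases hatt : ∃ x₀, ρ x₀ = M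
  · -- supremum attained: interior minimum of M Ψ₁ - ψ
    obtain ⟨x₀, hx₀⟩ := hatt
    have hmin : ∀ x, (fun y => M * Ψ₁ y - ψ y) x₀ ≤ (fun y => M * Ψ₁ y - ψ y) x := by
      intro x
      have h1 : M * Ψ₁ x₀ - ψ x₀ = 0 := by rw [hψρ x₀, hx₀]; ring
      have h2 : 0 ≤ M * Ψ₁ x - ψ x := by
        rw [hψρ x]
        nlinarith [hΨ₁pos x, hρleM x]
      simpa [h1] using h2
    have hC2u : ContDiff ℝ 2 (fun y => M * Ψ₁ y - ψ y) := (contDiff_const.mul hΨ₁C2).sub hψC2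
    have h0 : 0 ≤ Lop a b (fun y => M * Ψ₁ y - ψ y) x₀ :=
      Lop_nonneg_at_min hC2u hmin (hstand.posdef x₀).posSemidef
    rw [Lop_sub_const_mul hΨ₁C2 hψC2 M x₀] at h0
    have h2 := heq₁ x₀
    have h3 := hsub x₀
    have h4 : ψ x₀ = M * Ψ₁ x₀ := by rw [hψρ x₀, hx₀]
    rw [h4] at h3
    have h2M : M * Lop a b Ψ₁ x₀ + M * (V x₀ - l) * Ψ₁ x₀ = 0 := by linear_combination M * h2
    have hprod : 0 < (lam - l) * (M * Ψ₁ x₀) :=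
      mul_pos (sub_pos.mpr hlam) (mul_pos hMpos (hΨ₁pos x₀))
    nlinarith [h0, h2M, h3, hprod]
  · -- supremum not attained: use the minimal growth property
    push_neg at hatt
    have hρlt : ∀ x, ρ x < M := fun x => lt_of_le_of_ne (hρleM x) (hatt x)
    have hvC2 : ContDiffOn ℝ 2 (fun y => M * Ψ₁ y - ψ y) (Set.univ \ ∅) :=
      ((contDiff_const.mul hΨ₁C2).sub hψC2).contDiffOn
    have hvpos : ∀ x ∈ Set.univ \ (∅ : Set (Euc d)), 0 < M * Ψ₁ x - ψ x := by
      intro x _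
      rw [hψρ x]
      nlinarith [hΨ₁pos x, hρlt x]
    have hvsuper : ∀ x ∈ Set.univ \ (∅ : Set (Euc d)),
        Lop a b (fun y => M * Ψ₁ y - ψ y) x + (V x - l) * (M * Ψ₁ x - ψ x) ≤ 0 := by
      intro x _
      rw [Lop_sub_const_mul hΨ₁C2 hψC2 M x]
      have h2 := heq₁ x
      have h3 := hsub x
      have h5 : 0 ≤ ψ x := by
        rw [hψρ x]
        exact mul_nonneg (hρnonneg x) (hΨ₁pos x).le
      nlinarith [mul_nonneg (mul_nonneg (by norm_num : (0:ℝ) ≤ 2) (le_of_lt (sub_pos.mpr hlam))) h5]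
    obtain ⟨K', hK'c, -, -, κ', hκ'pos, hκ'b⟩ :=
      hmg ∅ isCompact_empty (Set.empty_subset _) (fun y => M * Ψ₁ y - ψ y) hvC2 hvpos hvsuper
    have hout : ∀ x, x ∉ K' → ρ x ≤ M - κ' := by
      intro x hx
      have := hκ'b x ⟨Set.mem_univ x, hx⟩
      rw [hψρ x] at this
      nlinarith [hΨ₁pos x]
    rcases K'.eq_empty_or_nonempty with hKe | hKne
    · have : M ≤ M - κ' := by
        apply csSup_le hrne
        rintro r ⟨x, rfl⟩
        exact hout x (by simp [hKe])
      linarith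
    · obtain ⟨y₀, hy₀K, hy₀max⟩ := hK'c.exists_isMaxOn hKne hρcont.continuousOn
      have hc : ∀ x, ρ x ≤ max (ρ y₀) (M - κ') := by
        intro x
        by_cases hxK : x ∈ K'
        · exact le_trans (hy₀max hxK) (le_max_left _ _)
        · exact le_trans (hout x hxK) (le_max_right _ _)
      have hMle : M ≤ max (ρ y₀) (M - κ') := by
        apply csSup_le hrne
        rintro r ⟨x, rfl⟩
        exact hc x
      have : max (ρ y₀) (M - κ') < M := max_lt (hρlt y₀) (by linarith)
      linarith
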